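/- For every $v, f \in [0,1]$ there exist density operators $\sigma_0, \sigma_1$ and orthogonal projections $P_0, P_1$ on a finite-dimensional Hilbert space such that $\|\sqrt{\sigma_0}\sqrt{\sigma_1}\|_1 = f$, $\frac{1}{2}(\mathrm{Tr}(P_0\sigma_0)+\mathrm{Tr}(P_1\sigma_1)) = v$, and $\frac{1}{2}(\mathrm{Tr}(P_1P_0\sigma_0 P_0 P_1) + \mathrm{Tr}(P_0P_1\sigma_1 P_1 P_0)) = v\left(\max\{0,(2v-1)f - 2\sqrt{v(1-v)}\sqrt{1-f^2}\}\right)^2$. -/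

import Mathlib

open Matrix BigOperators ComplexOrder

/-- The positive semidefinite square root (as defined in Mathlib of December 2024). -/
noncomputable def Matrix.PosSemidef.sqrt {n 𝕜 : Type*} [Fintype n] [RCLike 𝕜] [DecidableEq n]
    {A : Matrix n n 𝕜} (hA : A.PosSemidef) : Matrix n n 𝕜 :=
  hA.1.eigenvectorUnitary.1 * diagonal ((↑) ∘ Real.sqrt ∘ hA.1.eigenvalues) *
  (star hA.1.eigenvectorUnitary : Matrix n n 𝕜)

open scoped MatrixOrder in
lemma Matrix.PosSemidef.eq_sqrt_of_sq_eq {n 𝕜 : Type*} [Fintype n] [RCLike 𝕜] [DecidableEq n]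
    {A B : Matrix n n 𝕜} (hA : A.PosSemidef) (hB : B.PosSemidef) (h : A ^ 2 = B) :
    A = hB.sqrt := by
  have e : hB.sqrt = CFC.sqrt B := by
    rw [CFC.sqrt_eq_cfc, cfc_nnreal_eq_real _ B hB.nonneg, hB.1.cfc_eq]
    simp only [IsHermitian.cfc, Matrix.PosSemidef.sqrt, Unitary.conjStarAlgAut_apply]
    congr 3
    funext x
    simp only [Function.comp_apply]
    unfold Real.sqrt
    rfl
  rw [e]
  exact (CFC.sqrt_unique (by rw [← sq]; exact h) hA.nonneg).symm

/-- The trace norm of a complex matrix: `‖A‖₁ = Tr √(Aᴴ A)`. -/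
noncomputable def traceNorm {d : ℕ} (A : Matrix (Fin d) (Fin d) ℂ) : ℝ :=
  ((Matrix.posSemidef_conjTranspose_mul_self A).sqrt).trace.re



noncomputable def ov {d : ℕ} (u w : Fin d → ℝ) : Matrix (Fin d) (Fin d) ℂ :=
  Matrix.of fun i j => ((u i * w j : ℝ) : ℂ)

lemma ov_mul {d : ℕ} (u w a b : Fin d → ℝ) :
    ov u w * ov a b = ((∑ k, w k * a k : ℝ) : ℂ) • ov u b := by
  ext i j
  simp only [ov, Matrix.mul_apply, Matrix.smul_apply, Matrix.of_apply, smul_eq_mul]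
  push_cast
  rw [Finset.sum_mul]
  exact Finset.sum_congr rfl fun k _ => by ring

lemma ov_conjT {d : ℕ} (u w : Fin d → ℝ) : (ov u w)ᴴ = ov w u := by
  ext i j
  simp [ov, Matrix.conjTranspose_apply, Complex.conj_ofReal, mul_comm]

lemma ov_herm {d : ℕ} (u : Fin d → ℝ) : (ov u u).IsHermitian := ov_conjT u u

lemma ov_trace {d : ℕ} (u w : Fin d → ℝ) : (ov u w).trace = ((∑ i, u i * w i : ℝ) : ℂ) := by
  simp [Matrix.trace, Matrix.diag, ov]

lemma ov_posSemidef {d : ℕ} (u : Fin d → ℝ) : (ov u u).PosSemidef := by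
  have h : ov u u = (Matrix.of fun (_ : Fin 1) j => ((u j : ℝ) : ℂ))ᴴ *
      (Matrix.of fun (_ : Fin 1) j => ((u j : ℝ) : ℂ)) := by
    ext i j
    simp [ov, Matrix.mul_apply, Matrix.conjTranspose_apply, Complex.conj_ofReal]
  rw [h]
  exact Matrix.posSemidef_conjTranspose_mul_self _


lemma master {d : ℕ} (s0 s1 p0 p1 : Fin d → ℝ) (v f : ℝ)
    (hs0 : ∑ i, s0 i * s0 i = 1) (hs1 : ∑ i, s1 i * s1 i = 1)
    (hp0 : ∑ i, p0 i * p0 i = 1) (hp1 : ∑ i, p1 i * p1 i = 1)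
    (hf0 : 0 ≤ f) (hfid : ∑ i, s0 i * s1 i = f)
    (hval : 1/2 * ((∑ i, p0 i * s0 i)^2 + (∑ i, p1 i * s1 i)^2) = v)
    (herr : 1/2 * ((∑ i, p1 i * p0 i)^2 * (∑ i, p0 i * s0 i)^2
        + (∑ i, p0 i * p1 i)^2 * (∑ i, p1 i * s1 i)^2)
      = v * (max 0 ((2*v-1)*f - 2*Real.sqrt (v*(1-v)) * Real.sqrt (1-f^2)))^2) :
    ∃ (σ0 σ1 P0 P1 : Matrix (Fin d) (Fin d) ℂ)
      (h0 : σ0.PosSemidef) (h1 : σ1.PosSemidef),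
      σ0.trace = 1 ∧ σ1.trace = 1 ∧
      P0.IsHermitian ∧ P0 * P0 = P0 ∧ P1.IsHermitian ∧ P1 * P1 = P1 ∧
      traceNorm (h0.sqrt * h1.sqrt) = f ∧
      (1 / 2) * (((P0 * σ0).trace).re + ((P1 * σ1).trace).re) = v ∧
      (1 / 2) * (((P1 * P0 * σ0 * P0 * P1).trace).re + ((P0 * P1 * σ1 * P1 * P0).trace).re)
        = v * (max 0 ((2 * v - 1) * f
            - 2 * Real.sqrt (v * (1 - v)) * Real.sqrt (1 - f ^ 2))) ^ 2 := by
  have hcomm : ∀ (a b : Fin d → ℝ), ∑ i, a i * b i = ∑ i, b i * a i :=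
    fun a b => Finset.sum_congr rfl (fun i _ => mul_comm _ _)
  refine ⟨ov s0 s0, ov s1 s1, ov p0 p0, ov p1 p1,
    ov_posSemidef s0, ov_posSemidef s1, ?_, ?_, ov_herm p0, ?_, ov_herm p1, ?_, ?_, ?_, ?_⟩
  · rw [ov_trace, hs0]; norm_num
  · rw [ov_trace, hs1]; norm_num
  · rw [ov_mul, hp0]; norm_num
  · rw [ov_mul, hp1]; norm_num
  · -- trace norm
    have sq0 : (ov s0 s0) ^ 2 = ov s0 s0 := by
      rw [pow_two, ov_mul, hs0]; norm_num
    have sq1 : (ov s1 s1) ^ 2 = ov s1 s1 := by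
      rw [pow_two, ov_mul, hs1]; norm_num
    have e0 : (ov_posSemidef s0).sqrt = ov s0 s0 :=
      ((ov_posSemidef s0).eq_sqrt_of_sq_eq (ov_posSemidef s0) sq0).symm
    have e1 : (ov_posSemidef s1).sqrt = ov s1 s1 :=
      ((ov_posSemidef s1).eq_sqrt_of_sq_eq (ov_posSemidef s1) sq1).symm
    rw [e0, e1]
    set u : Fin d → ℝ := fun i => Real.sqrt f * s1 i with hu
    have huu : ∑ i, u i * u i = f := by
      have : ∀ i, u i * u i = f * (s1 i * s1 i) := by
        intro i
        simp only [hu]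
        have := Real.mul_self_sqrt hf0
        nlinarith [this]
      rw [Finset.sum_congr rfl (fun i _ => this i), ← Finset.mul_sum, hs1, mul_one]
    have hsquu : (ov u u) ^ 2 = (ov s0 s0 * ov s1 s1)ᴴ * (ov s0 s0 * ov s1 s1) := by
      rw [pow_two, ov_mul, huu]
      rw [Matrix.conjTranspose_mul, ov_conjT, ov_conjT]
      rw [show ov s1 s1 * ov s0 s0 * (ov s0 s0 * ov s1 s1)
          = ov s1 s1 * (ov s0 s0 * ov s0 s0) * ov s1 s1 by
        rw [Matrix.mul_assoc, Matrix.mul_assoc, Matrix.mul_assoc]]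
      simp only [ov_mul, Matrix.mul_smul, Matrix.smul_mul, smul_smul, hs0]
      rw [hcomm s1 s0, hfid]
      have huu2 : ov u u = ((f : ℝ) : ℂ) • ov s1 s1 := by
        ext i j
        simp only [ov, hu, Matrix.smul_apply, Matrix.of_apply, smul_eq_mul]
        rw [← Complex.ofReal_mul, Complex.ofReal_inj]
        linear_combination (s1 i * s1 j) * Real.mul_self_sqrt hf0
      rw [huu2, smul_smul]
      congr 1
      push_cast
      ring
    have key : (Matrix.posSemidef_conjTranspose_mul_self (ov s0 s0 * ov s1 s1)).sqrt
        = ov u u :=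
      ((ov_posSemidef u).eq_sqrt_of_sq_eq _ hsquu).symm
    rw [traceNorm, key, ov_trace, huu, Complex.ofReal_re]
  · -- value
    rw [ov_mul, ov_mul, Matrix.trace_smul, Matrix.trace_smul, ov_trace, ov_trace,
      smul_eq_mul, smul_eq_mul, ← Complex.ofReal_mul, ← Complex.ofReal_mul,
      Complex.ofReal_re, Complex.ofReal_re]
    linear_combination hval
  · -- error
    simp only [ov_mul, smul_mul_assoc, Matrix.mul_smul, smul_smul, Matrix.trace_smul,
      ov_trace, smul_eq_mul]
    rw [hp1, hp0]
    simp only [← Complex.ofReal_mul, Complex.ofReal_re]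
    rw [hcomm s0 p0, hcomm s1 p1, hcomm p0 p1]
    rw [hcomm p0 p1] at herr
    linear_combination herr

lemma aux_vlt1 (v f : ℝ) (hv0 : 0 ≤ v) (hv1 : v ≤ 1) (hf0 : 0 ≤ f)
    (hB : (2*v-1)*f - 2*Real.sqrt (v*(1-v)) * Real.sqrt (1-f^2) < 0) :
    v < 1 := by
  by_contra h
  push_neg at h
  have hveq : v = 1 := le_antisymm hv1 h
  subst hveq
  simp [Real.sqrt_eq_zero'] at hB
  nlinarith [hB]

lemma aux_key (v f : ℝ) (hv0 : 0 ≤ v) (hv1 : v < 1) (hf0 : 0 ≤ f) (hf1 : f ≤ 1)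
    (hB : (2*v-1)*f - 2*Real.sqrt (v*(1-v)) * Real.sqrt (1-f^2) < 0) :
    (Real.sqrt v - Real.sqrt (1-f))^2 ≤ 1 - v := by
  set sv := Real.sqrt v with hsvd
  set t := Real.sqrt (1-f) with htd
  have hsv : sv^2 = v := Real.sq_sqrt hv0
  have ht : t^2 = 1-f := Real.sq_sqrt (by linarith)
  have h1 : 0 ≤ sv*t := mul_nonneg (Real.sqrt_nonneg _) (Real.sqrt_nonneg _)
  rcases le_or_gt (2*v - f) 0 with h|h
  · nlinarith [hsv, ht, h1, h]
  · have hq : f^2 ≤ 4*v*(1-v) := by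
      rcases le_or_gt v (1/2) with hv2|hv2
      · nlinarith [h, hf0]
      · set g := Real.sqrt (v*(1-v)) with hgd
        set hh := Real.sqrt (1-f^2) with hhd
        have hg2 : g^2 = v*(1-v) := Real.sq_sqrt (by nlinarith)
        have hh2 : hh^2 = 1-f^2 := Real.sq_sqrt (by nlinarith)
        have hg0 : 0 ≤ g := Real.sqrt_nonneg _
        have hh0 : 0 ≤ hh := Real.sqrt_nonneg _
        by_contra h'
        push_neg at h'
        have hfg : 2*g ≤ f := by
          by_contra h2
          push_neg at h2
          nlinarith [hg0, hf0, h', hg2]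
        have hhlt : hh ≤ 2*v-1 := by
          by_contra h2
          push_neg at h2
          nlinarith [hh0, hh2, h', hg2, hv2]
        nlinarith [hB, mul_le_mul_of_nonneg_right hfg hh0,
          mul_le_mul_of_nonneg_left hhlt hf0]
    have h2 : (2*v-f)^2 ≤ (2*sv*t)^2 := by nlinarith [hsv, ht, hq]
    nlinarith [hsv, ht, h2, h1, h]

/-- Tightness of the fidelity-based robust consecutive measurement theorem. -/
theorem robust_CMT_fidelity_tightness (v f : ℝ)
    (hv : v ∈ Set.Icc (0 : ℝ) 1) (hf : f ∈ Set.Icc (0 : ℝ) 1) :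
    ∃ (d : ℕ) (σ0 σ1 P0 P1 : Matrix (Fin d) (Fin d) ℂ)
      (h0 : σ0.PosSemidef) (h1 : σ1.PosSemidef),
      σ0.trace = 1 ∧ σ1.trace = 1 ∧
      P0.IsHermitian ∧ P0 * P0 = P0 ∧ P1.IsHermitian ∧ P1 * P1 = P1 ∧
      traceNorm (h0.sqrt * h1.sqrt) = f ∧
      (1 / 2) * (((P0 * σ0).trace).re + ((P1 * σ1).trace).re) = v ∧
      (1 / 2) * (((P1 * P0 * σ0 * P0 * P1).trace).re + ((P0 * P1 * σ1 * P1 * P0).trace).re)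
        = v * (max 0 ((2 * v - 1) * f
            - 2 * Real.sqrt (v * (1 - v)) * Real.sqrt (1 - f ^ 2))) ^ 2 := by
  obtain ⟨hv0, hv1⟩ := hv
  obtain ⟨hf0, hf1⟩ := hf
  rcases le_or_gt 0 ((2*v-1)*f - 2*Real.sqrt (v*(1-v)) * Real.sqrt (1-f^2)) with hA | hB
  · -- case A: dimension 2
    set ca := Real.sqrt v with hcad
    set sa := Real.sqrt (1-v) with hsad
    set cb := Real.sqrt ((1+f)/2) with hcbd
    set sb := Real.sqrt ((1-f)/2) with hsbd
    have hca : ca^2 = v := Real.sq_sqrt hv0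
    have hsa : sa^2 = 1 - v := Real.sq_sqrt (by linarith)
    have hcb : cb^2 = (1+f)/2 := Real.sq_sqrt (by linarith)
    have hsb : sb^2 = (1-f)/2 := Real.sq_sqrt (by linarith)
    have hg : Real.sqrt (v*(1-v)) = ca * sa := by
      rw [show v*(1-v) = (ca*sa)^2 by rw [mul_pow, hca, hsa],
        Real.sqrt_sq (by positivity)]
    have hh : Real.sqrt (1-f^2) = 2*(cb*sb) := by
      rw [show 1-f^2 = (2*(cb*sb))^2 by
        rw [show (2*(cb*sb))^2 = 4*cb^2*sb^2 by ring, hcb, hsb]; ring,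
        Real.sqrt_sq (by positivity)]
    refine ⟨2, ?_⟩
    refine master ![cb, -sb] ![cb, sb] ![ca*cb - sa*sb, -(sa*cb + ca*sb)]
      ![ca*cb - sa*sb, sa*cb + ca*sb] v f ?_ ?_ ?_ ?_ hf0 ?_ ?_ ?_
    · simp only [Fin.sum_univ_two, Matrix.cons_val_zero, Matrix.cons_val_one, Matrix.head_cons]
      linear_combination hcb + hsb
    · simp only [Fin.sum_univ_two, Matrix.cons_val_zero, Matrix.cons_val_one, Matrix.head_cons]
      linear_combination hcb + hsb
    · simp only [Fin.sum_univ_two, Matrix.cons_val_zero, Matrix.cons_val_one, Matrix.head_cons]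
      linear_combination (cb^2+sb^2)*hca + (cb^2+sb^2)*hsa + hcb + hsb
    · simp only [Fin.sum_univ_two, Matrix.cons_val_zero, Matrix.cons_val_one, Matrix.head_cons]
      linear_combination (cb^2+sb^2)*hca + (cb^2+sb^2)*hsa + hcb + hsb
    · simp only [Fin.sum_univ_two, Matrix.cons_val_zero, Matrix.cons_val_one, Matrix.head_cons]
      linear_combination hcb - hsb
    · simp only [Fin.sum_univ_two, Matrix.cons_val_zero, Matrix.cons_val_one, Matrix.head_cons]
      linear_combination (cb^2+sb^2)^2*hca + v*(cb^2+sb^2+1)*hcb + v*(cb^2+sb^2+1)*hsb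
    · simp only [Fin.sum_univ_two, Matrix.cons_val_zero, Matrix.cons_val_one, Matrix.head_cons]
      rw [max_eq_right hA, hg, hh]
      linear_combination
        ((ca*cb - sa*sb)^2 - (sa*cb + ca*sb)^2)^2 *
          (((ca*cb - sa*sb)*cb + (sa*cb + ca*sb)*sb) + ca) * (ca*hcb + ca*hsb)
        + ca^2*(((ca*cb - sa*sb)^2 - (sa*cb + ca*sb)^2)
            + ((2*v-1)*f - 2*(ca*sa)*(2*(cb*sb)))) *
          ((cb^2-sb^2)*(hca - hsa) + (2*v-1)*(hcb - hsb))
        + ((2*v-1)*f - 2*(ca*sa)*(2*(cb*sb)))^2 * hca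
  · -- case B: dimension 3
    have hvlt1 : v < 1 := aux_vlt1 v f hv0 hv1 hf0 hB
    set sv := Real.sqrt v with hsvd
    set t := Real.sqrt (1-f) with htd
    set sw := Real.sqrt (1-v) with hswd
    have hsv : sv^2 = v := Real.sq_sqrt hv0
    have ht : t^2 = 1-f := Real.sq_sqrt (by linarith)
    have hsw : sw^2 = 1-v := Real.sq_sqrt (by linarith)
    have hswpos : 0 < sw := Real.sqrt_pos.2 (by linarith)
    have key : (sv - t)^2 ≤ 1 - v := aux_key v f hv0 hvlt1 hf0 hf1 hB
    set x := (sv - t)/sw with hxd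
    have hzx : sw * x = sv - t := by
      rw [hxd]
      field_simp
    have hx1 : x^2 ≤ 1 := by
      rw [hxd, div_pow, div_le_one (by positivity)]
      rw [hsw]
      exact key
    set y := Real.sqrt (1 - x^2) with hyd
    have hy : y^2 = 1 - x^2 := Real.sq_sqrt (by linarith)
    refine ⟨3, ?_⟩
    refine master ![sv, sw*x, sw*y] ![sw*x, sv, sw*y] ![1,0,0] ![0,1,0] v f
      ?_ ?_ ?_ ?_ hf0 ?_ ?_ ?_
    · simp only [Fin.sum_univ_three, Matrix.cons_val_zero, Matrix.cons_val_one,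
        Matrix.head_cons, Matrix.cons_val_two, Matrix.tail_cons]
      linear_combination hsv + (x^2+y^2)*hsw + (1-v)*hy
    · simp only [Fin.sum_univ_three, Matrix.cons_val_zero, Matrix.cons_val_one,
        Matrix.head_cons, Matrix.cons_val_two, Matrix.tail_cons]
      linear_combination hsv + (x^2+y^2)*hsw + (1-v)*hy
    · simp only [Fin.sum_univ_three, Matrix.cons_val_zero, Matrix.cons_val_one,
        Matrix.head_cons, Matrix.cons_val_two, Matrix.tail_cons]
      norm_num
    · simp only [Fin.sum_univ_three, Matrix.cons_val_zero, Matrix.cons_val_one,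
        Matrix.head_cons, Matrix.cons_val_two, Matrix.tail_cons]
      norm_num
    · simp only [Fin.sum_univ_three, Matrix.cons_val_zero, Matrix.cons_val_one,
        Matrix.head_cons, Matrix.cons_val_two, Matrix.tail_cons]
      linear_combination 2*sv*hzx + sw^2*hy - (sw*x + sv - t)*hzx + hsv - ht + hsw
    · simp only [Fin.sum_univ_three, Matrix.cons_val_zero, Matrix.cons_val_one,
        Matrix.head_cons, Matrix.cons_val_two, Matrix.tail_cons]
      linear_combination hsv
    · simp only [Fin.sum_univ_three, Matrix.cons_val_zero, Matrix.cons_val_one,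
        Matrix.head_cons, Matrix.cons_val_two, Matrix.tail_cons]
      rw [max_eq_left (le_of_lt hB)]
      ring
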